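/- arXiv:2408.08625 — 3 statements merged into one kernel-verified Lean document; each statement's English description precedes it below -/
import Mathlib

section
/- Let b : ℝ → ℝ be integrable on [0, l] (l > 0) and symmetric about the channel center, i.e. b(y) = b(l - y) for all y ∈ [0, l]. Define b̄ = (1/l) ∫₀ˡ b(y) dy and S(y) = ∫₀ʸ (b̄ - b(s)) ds. Then the average S̄ = (1/l) ∫₀ˡ S(y) dy equals 0. -/
open MeasureTheory intervalIntegral

/-- For a symmetric bathymetry `b(y) = b(l-y)` on `[0,l]`, the mean of
`S(y) = ∫₀ʸ (b̄ - b(s)) ds` over `[0,l]` vanishes. -/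
theorem mean_S_eq_zero_of_symmetric
    (l : ℝ) (hl : 0 < l) (b : ℝ → ℝ)
    (hb : IntervalIntegrable b volume 0 l)
    (hsym : ∀ y ∈ Set.Icc (0:ℝ) l, b y = b (l - y)) :
    (1/l) * ∫ y in (0:ℝ)..l,
      (∫ s in (0:ℝ)..y, ((1/l) * ∫ t in (0:ℝ)..l, b t) - b s) = 0 := by
  set c : ℝ := (1/l) * ∫ t in (0:ℝ)..l, b t with hc
  set g : ℝ → ℝ := fun s => c - b s with hg
  have hgint : IntervalIntegrable g volume 0 l := intervalIntegrable_const.sub hb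
  have hIcc : Set.uIcc (0:ℝ) l = Set.Icc 0 l := Set.uIcc_of_le hl.le
  have hgl : ∫ s in (0:ℝ)..l, g s = 0 := by
    rw [hg]
    rw [intervalIntegral.integral_sub intervalIntegrable_const hb,
      intervalIntegral.integral_const]
    rw [hc]
    field_simp
    rw [sub_zero, smul_eq_mul, mul_div_assoc', mul_comm, mul_div_assoc, div_self hl.ne', mul_one, sub_self]
  set F : ℝ → ℝ := fun y => ∫ s in (0:ℝ)..y, g s with hF
  have hneg : ∀ y ∈ Set.uIcc (0:ℝ) l, F (l - y) = - F y := by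
    intro y hy
    rw [hIcc] at hy
    have h1 : (0:ℝ) ∈ Set.uIcc (0:ℝ) l := Set.left_mem_uIcc
    have hly : l - y ∈ Set.uIcc (0:ℝ) l := by
      rw [hIcc]; constructor <;> [linarith [hy.2]; linarith [hy.1]]
    have hl' : l ∈ Set.uIcc (0:ℝ) l := Set.right_mem_uIcc
    have hint1 : IntervalIntegrable g volume 0 (l - y) :=
      hgint.mono_set (Set.uIcc_subset_uIcc h1 hly)
    have hint2 : IntervalIntegrable g volume (l - y) l :=
      hgint.mono_set (Set.uIcc_subset_uIcc hly hl')
    have hadd : F (l - y) + ∫ s in (l-y)..l, g s = 0 := by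
      rw [hF]
      simp only
      rw [intervalIntegral.integral_add_adjacent_intervals hint1 hint2, hgl]
    have hsub : ∫ s in (l-y)..l, g s = F y := by
      have h2 : ∫ u in (0:ℝ)..y, g (l - u) = ∫ s in (l - y)..(l - 0), g s :=
        intervalIntegral.integral_comp_sub_left g l
      rw [sub_zero] at h2
      rw [← h2]
      apply intervalIntegral.integral_congr
      intro u hu
      rw [Set.uIcc_of_le hy.1] at hu
      have hu' : u ∈ Set.Icc (0:ℝ) l := ⟨hu.1, le_trans hu.2 hy.2⟩
      simp only [hg]
      rw [← hsym u hu']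
    linarith
  have key : (∫ y in (0:ℝ)..l, F y) = - ∫ y in (0:ℝ)..l, F y := by
    have h3 : ∫ y in (0:ℝ)..l, F (l - y) = ∫ y in (l - l)..(l - 0), F y :=
      intervalIntegral.integral_comp_sub_left F l
    rw [sub_self, sub_zero] at h3
    calc (∫ y in (0:ℝ)..l, F y) = ∫ y in (0:ℝ)..l, F (l - y) := h3.symm
      _ = ∫ y in (0:ℝ)..l, - F y := intervalIntegral.integral_congr hneg
      _ = - ∫ y in (0:ℝ)..l, F y := intervalIntegral.integral_neg
  have : (∫ y in (0:ℝ)..l, F y) = 0 := by linarith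
  simp only [hF, hg] at this
  rw [this, mul_zero]
end

section
/- For the triangular bathymetry on [0, l] with l = l₁ + l₂, defined by b(y) = b₀(1 - y/l₁) for 0 ≤ y ≤ l₁ and b(y) = b₀(y - l₁)/l₂ for l₁ ≤ y ≤ l, the dispersion coefficient χ = Var(S) = S̄² − (S̄)² equals b₀²(l₁² + 4 l₁ l₂ + l₂²)/720, where S(y) = ∫₀ʸ (b̄ - b(s)) ds and the averages are over [0,l]. -/
open MeasureTheory intervalIntegral

set_option maxHeartbeats 1000000 in
lemma poly_int (a b c0 c1 c2 c3 c4 : ℝ) :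
    ∫ x in a..b, (c0 + c1*x + c2*x^2 + c3*x^3 + c4*x^4)
      = (c0*b + c1*b^2/2 + c2*b^3/3 + c3*b^4/4 + c4*b^5/5)
        - (c0*a + c1*a^2/2 + c2*a^3/3 + c3*a^4/4 + c4*a^5/5) := by
  have h : ∀ x ∈ Set.uIcc a b,
      HasDerivAt (fun x => c0*x + c1*x^2/2 + c2*x^3/3 + c3*x^4/4 + c4*x^5/5)
        (c0 + c1*x + c2*x^2 + c3*x^3 + c4*x^4) x := by
    intro x _
    have H : HasDerivAt (fun x => c0*x + c1*x^2/2 + c2*x^3/3 + c3*x^4/4 + c4*x^5/5)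
        (c0*1 + c1*((2:ℕ)*x^1)/2 + c2*((3:ℕ)*x^2)/3 + c3*((4:ℕ)*x^3)/4 + c4*((5:ℕ)*x^4)/5) x :=
      ((((hasDerivAt_id' x).const_mul c0).add
        (((hasDerivAt_pow 2 x).const_mul c1).div_const 2)).add
        (((hasDerivAt_pow 3 x).const_mul c2).div_const 3)).add
        (((hasDerivAt_pow 4 x).const_mul c3).div_const 4) |>.add
        (((hasDerivAt_pow 5 x).const_mul c4).div_const 5)
    convert H using 1
    push_cast
    ring
  rw [intervalIntegral.integral_eq_sub_of_hasDerivAt h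
    ((by continuity : Continuous fun x : ℝ => c0 + c1*x + c2*x^2 + c3*x^3 + c4*x^4).intervalIntegrable a b)]

set_option maxHeartbeats 2000000 in
/-- For the triangular bathymetry on `[0, l₁+l₂]`, the variance of
`S(y) = ∫₀ʸ (b̄ - b)` equals `b₀²(l₁² + 4 l₁ l₂ + l₂²)/720`. -/
theorem chi_triangular (b₀ l₁ l₂ : ℝ) (hb₀ : 0 < b₀) (h₁ : 0 < l₁) (h₂ : 0 < l₂) :
    let l : ℝ := l₁ + l₂
    let b : ℝ → ℝ := fun y => if y ≤ l₁ then b₀ * (1 - y/l₁) else b₀ * (y - l₁)/l₂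
    let bbar : ℝ := (1/l) * ∫ t in (0:ℝ)..l, b t
    let S : ℝ → ℝ := fun y => ∫ s in (0:ℝ)..y, (bbar - b s)
    (1/l) * (∫ y in (0:ℝ)..l, (S y)^2) - ((1/l) * ∫ y in (0:ℝ)..l, S y)^2
      = b₀^2 * (l₁^2 + 4*l₁*l₂ + l₂^2) / 720 := by
  intro l b bbar S
  have hl : l = l₁ + l₂ := rfl
  have hl₁ : l₁ ≠ 0 := ne_of_gt h₁
  have hl₂ : l₂ ≠ 0 := ne_of_gt h₂
  have hlpos : 0 < l := by rw [hl]; linarith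
  have hlne : l ≠ 0 := ne_of_gt hlpos
  have hl₁l : l₁ ≤ l := by rw [hl]; linarith
  have hbdef : ∀ y, b y = if y ≤ l₁ then b₀ * (1 - y/l₁) else b₀ * (y - l₁)/l₂ := fun _ => rfl
  -- continuity of b
  have hbcont : Continuous b := by
    have hb : b = fun y => if y ≤ l₁ then b₀ * (1 - y/l₁) else b₀ * (y - l₁)/l₂ := rfl
    rw [hb]
    apply Continuous.if_le (by continuity) (by continuity) continuous_id continuous_const
    intro x hx
    simp only [id_eq] at hx
    rw [hx]
    field_simp
    ring
  -- value of bbar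
  have hIb1 : ∫ t in (0:ℝ)..l₁, b t = b₀*l₁/2 := by
    rw [intervalIntegral.integral_congr
      (g := fun t => b₀ + (-(b₀/l₁))*t + 0*t^2 + 0*t^3 + 0*t^4) ?_, poly_int]
    · field_simp
      ring
    · intro t ht
      rw [Set.uIcc_of_le h₁.le] at ht
      simp only [hbdef]
      rw [if_pos ht.2]
      field_simp
      ring
  have hIb2 : ∫ t in l₁..l, b t = b₀*l₂/2 := by
    rw [intervalIntegral.integral_congr
      (g := fun t => (-(b₀*l₁/l₂)) + (b₀/l₂)*t + 0*t^2 + 0*t^3 + 0*t^4) ?_, poly_int, hl]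
    · field_simp
      ring
    · intro t ht
      rw [Set.uIcc_of_le hl₁l] at ht
      simp only [hbdef]
      split_ifs with h
      · have ht1 : t = l₁ := le_antisymm h ht.1
        subst ht1
        field_simp
        ring
      · field_simp
        ring
  have hbbar : bbar = b₀/2 := by
    have hbb : bbar = (1/l) * ∫ t in (0:ℝ)..l, b t := rfl
    rw [hbb, ← integral_add_adjacent_intervals (a := (0:ℝ)) (b := l₁) (c := l)
        (hbcont.intervalIntegrable _ _) (hbcont.intervalIntegrable _ _),
      hIb1, hIb2, hl]
    field_simp
  -- the integrand of S
  have hicont : Continuous fun s => bbar - b s := continuous_const.sub hbcont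
  have hSdef : ∀ y, S y = ∫ s in (0:ℝ)..y, (bbar - b s) := fun _ => rfl
  -- S on the first piece
  have hS1 : ∀ y, 0 ≤ y → y ≤ l₁ → S y = b₀*y^2/(2*l₁) - b₀*y/2 := by
    intro y hy0 hy
    rw [hSdef, intervalIntegral.integral_congr
      (g := fun s => (-(b₀/2)) + (b₀/l₁)*s + 0*s^2 + 0*s^3 + 0*s^4) ?_, poly_int]
    · field_simp
      ring
    · intro s hs
      rw [Set.uIcc_of_le hy0] at hs
      simp only [hbbar, hbdef]
      rw [if_pos (hs.2.trans hy)]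
      field_simp
      ring
  have hS1l : S l₁ = 0 := by
    rw [hS1 l₁ h₁.le le_rfl]
    field_simp
    ring
  -- S on the second piece
  have hS2 : ∀ y, l₁ ≤ y → S y = b₀*(y-l₁)/2 - b₀*(y-l₁)^2/(2*l₂) := by
    intro y hy
    rw [hSdef, ← integral_add_adjacent_intervals (a := (0:ℝ)) (b := l₁) (c := y)
        (hicont.intervalIntegrable _ _) (hicont.intervalIntegrable _ _),
      ← hSdef, hS1l, zero_add,
      intervalIntegral.integral_congr
        (g := fun s => (b₀/2 + b₀*l₁/l₂) + (-(b₀/l₂))*s + 0*s^2 + 0*s^3 + 0*s^4) ?_, poly_int]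
    · field_simp
      ring
    · intro s hs
      rw [Set.uIcc_of_le hy] at hs
      simp only [hbbar, hbdef]
      split_ifs with h
      · have hs1 : s = l₁ := le_antisymm h hs.1
        subst hs1
        field_simp
        ring
      · field_simp
        ring
  -- continuity of S
  have hScont : Continuous S := by
    have hs : S = fun y => ∫ s in (0:ℝ)..y, (bbar - b s) := rfl
    rw [hs]
    exact intervalIntegral.continuous_primitive (fun a b => hicont.intervalIntegrable a b) 0
  have hll₁ : l - l₁ = l₂ := by rw [hl]; ring
  -- integral of S
  have hI1 : ∫ y in (0:ℝ)..l, S y = b₀*(l₂^2 - l₁^2)/12 := by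
    rw [← integral_add_adjacent_intervals (a := (0:ℝ)) (b := l₁) (c := l)
        (hScont.intervalIntegrable _ _) (hScont.intervalIntegrable _ _)]
    have p1 : ∫ y in (0:ℝ)..l₁, S y = -(b₀*l₁^2/12) := by
      rw [intervalIntegral.integral_congr
        (g := fun y => 0 + (-(b₀/2))*y + (b₀/(2*l₁))*y^2 + 0*y^3 + 0*y^4) ?_, poly_int]
      · field_simp
        ring
      · intro y hy
        rw [Set.uIcc_of_le h₁.le] at hy
        simp only [hS1 y hy.1 hy.2]
        ring
    have p2 : ∫ y in l₁..l, S y = b₀*l₂^2/12 := by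
      rw [intervalIntegral.integral_congr
        (g := fun y => 0 + (b₀/2)*(y-l₁) + (-(b₀/(2*l₂)))*(y-l₁)^2 + 0*(y-l₁)^3 + 0*(y-l₁)^4) ?_]
      · rw [intervalIntegral.integral_comp_sub_right
            (fun u => 0 + (b₀/2)*u + (-(b₀/(2*l₂)))*u^2 + 0*u^3 + 0*u^4) l₁, hll₁, sub_self,
          poly_int]
        field_simp
        ring
      · intro y hy
        rw [Set.uIcc_of_le hl₁l] at hy
        simp only [hS2 y hy.1]
        ring
    rw [p1, p2]
    ring
  -- integral of S²
  have hI2 : ∫ y in (0:ℝ)..l, (S y)^2 = b₀^2*(l₁^3 + l₂^3)/120 := by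
    have hS2cont : Continuous fun y => (S y)^2 := hScont.pow 2
    rw [← integral_add_adjacent_intervals (a := (0:ℝ)) (b := l₁) (c := l)
        (hS2cont.intervalIntegrable _ _) (hS2cont.intervalIntegrable _ _)]
    have p1 : ∫ y in (0:ℝ)..l₁, (S y)^2 = b₀^2*l₁^3/120 := by
      rw [intervalIntegral.integral_congr
        (g := fun y => 0 + 0*y + (b₀^2/4)*y^2 + (-(b₀^2/(2*l₁)))*y^3 + (b₀^2/(4*l₁^2))*y^4) ?_,
        poly_int]
      · field_simp
        ring
      · intro y hy
        rw [Set.uIcc_of_le h₁.le] at hy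
        simp only [hS1 y hy.1 hy.2]
        field_simp
        ring
    have p2 : ∫ y in l₁..l, (S y)^2 = b₀^2*l₂^3/120 := by
      rw [intervalIntegral.integral_congr
        (g := fun y => 0 + 0*(y-l₁) + (b₀^2/4)*(y-l₁)^2 + (-(b₀^2/(2*l₂)))*(y-l₁)^3
          + (b₀^2/(4*l₂^2))*(y-l₁)^4) ?_]
      · rw [intervalIntegral.integral_comp_sub_right
            (fun u => 0 + 0*u + (b₀^2/4)*u^2 + (-(b₀^2/(2*l₂)))*u^3 + (b₀^2/(4*l₂^2))*u^4) l₁,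
          hll₁, sub_self, poly_int]
        field_simp
        ring
      · intro y hy
        rw [Set.uIcc_of_le hl₁l] at hy
        simp only [hS2 y hy.1]
        field_simp
        ring
    rw [p1, p2]
    ring
  rw [hI1, hI2, hl]
  field_simp
  ring
end

section
/- The 4×4 quasilinear hyperbolic relaxation system with conservative variables (h, hu, hη, hw), fluxes (hu, hu² + p_tot, huη, huw) where p_tot = g h²/2 + μ(η − 1/h), has characteristic speeds λ₁ = u − c, λ₂ = λ₃ = u, λ₄ = u + c, where c² = g h + μ/h². In particular, for g, μ > 0 and h > 0 the system is hyperbolic (all eigenvalues real) with c > 0. -/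
set_option maxHeartbeats 1000000 in
lemma det_fin_four' {R : Type*} [CommRing R] (M : Matrix (Fin 4) (Fin 4) R) :
    M.det =
      M 0 0 * (M 1 1 * (M 2 2 * M 3 3 - M 2 3 * M 3 2) -
               M 1 2 * (M 2 1 * M 3 3 - M 2 3 * M 3 1) +
               M 1 3 * (M 2 1 * M 3 2 - M 2 2 * M 3 1)) -
      M 0 1 * (M 1 0 * (M 2 2 * M 3 3 - M 2 3 * M 3 2) -
               M 1 2 * (M 2 0 * M 3 3 - M 2 3 * M 3 0) +
               M 1 3 * (M 2 0 * M 3 2 - M 2 2 * M 3 0)) +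
      M 0 2 * (M 1 0 * (M 2 1 * M 3 3 - M 2 3 * M 3 1) -
               M 1 1 * (M 2 0 * M 3 3 - M 2 3 * M 3 0) +
               M 1 3 * (M 2 0 * M 3 1 - M 2 1 * M 3 0)) -
      M 0 3 * (M 1 0 * (M 2 1 * M 3 2 - M 2 2 * M 3 1) -
               M 1 1 * (M 2 0 * M 3 2 - M 2 2 * M 3 0) +
               M 1 2 * (M 2 0 * M 3 1 - M 2 1 * M 3 0)) := by
  rw [Matrix.det_succ_row_zero, Fin.sum_univ_four]
  simp [Matrix.det_fin_three, Fin.sum_univ_succ, Matrix.submatrix_apply,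
    Fin.succAbove]
  norm_num [show (Fin.succ 2 : Fin 4) = 3 from rfl,
    show (((3 : Fin 4) : ℕ)) = 3 from rfl,
    show (Fin.castSucc (2 : Fin 3) : Fin 4) = 2 from rfl,
    show (if (2:Fin 4) < 3 then (2 : Fin 4) else 3) = 2 from by decide]
  ring


set_option maxHeartbeats 1000000 in
open ContinuousLinearMap in
/-- The 4×4 hyperbolic relaxation system with conserved variables
`(h, hu, hη, hw)`, fluxes `(hu, hu² + p_tot, huη, huw)` and
`p_tot = g h²/2 + μ(η - 1/h)`, has real characteristic speeds
`u - c, u, u, u + c` with `c² = gh + μ/h² > 0`: the eigenvalues of the flux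
Jacobian are exactly `u - c`, `u`, `u + c`. -/
theorem relaxation_system_eigenvalues (g μ h u η w : ℝ)
    (hg : 0 < g) (hμ : 0 < μ) (hh : 0 < h) :
    let F : (Fin 4 → ℝ) → (Fin 4 → ℝ) := fun q =>
      ![q 1,
        (q 1)^2 / (q 0) + g * (q 0)^2 / 2 + μ * ((q 2)/(q 0) - 1/(q 0)),
        (q 1) * (q 2) / (q 0),
        (q 1) * (q 3) / (q 0)]
    let q : Fin 4 → ℝ := ![h, h*u, h*η, h*w]
    let c : ℝ := Real.sqrt (g*h + μ/h^2)
    0 < c ∧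
    ∀ lam : ℝ,
      Module.End.HasEigenvalue ((fderiv ℝ F q).toLinearMap) lam ↔
        (lam = u - c ∨ lam = u ∨ lam = u + c) := by
  intro F q c
  have hh0 : h ≠ 0 := hh.ne'
  have hpos : 0 < g*h + μ/h^2 := by positivity
  have hc : 0 < c := Real.sqrt_pos.mpr hpos
  have hc2 : c^2 = g*h + μ/h^2 := Real.sq_sqrt hpos.le
  set A : Matrix (Fin 4) (Fin 4) ℝ :=
    !![0, 1, 0, 0;
       g*h + μ/h^2 - μ*η/h - u^2, 2*u, μ/h, 0;
       -(u*η), η, u, 0;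
       -(u*w), w, 0, u] with hA
  set L : (Fin 4 → ℝ) →L[ℝ] (Fin 4 → ℝ) :=
    LinearMap.toContinuousLinearMap (Matrix.toLin' A) with hL
  have hq0 : q 0 = h := by simp [q]
  have hq1 : q 1 = h * u := by simp [q]
  have hq2 : q 2 = h * η := by simp [q]
  have hq3 : q 3 = h * w := by simp [q]
  have hne : q 0 ≠ 0 := by rw [hq0]; exact hh0
  have P : ∀ j : Fin 4, HasFDerivAt (fun x : Fin 4 → ℝ => x j)
      (ContinuousLinearMap.proj (R := ℝ) (φ := fun _ : Fin 4 => ℝ) j) q := by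
    intro j; exact hasFDerivAt_apply j q
  have hinv : HasFDerivAt (fun x : Fin 4 → ℝ => (x 0)⁻¹)
      ((-((q 0)^2)⁻¹) • ContinuousLinearMap.proj (R := ℝ) (φ := fun _ : Fin 4 => ℝ) 0) q :=
    (hasDerivAt_inv hne).comp_hasFDerivAt q (P 0)
  have hF : HasFDerivAt F L q := by
    apply hasFDerivAt_pi''
    intro i
    fin_cases i
    · show HasFDerivAt (fun x : Fin 4 → ℝ => x 1) _ q
      refine (P 1).congr_fderiv ?_
      ext v
      simp [L, Matrix.mulVec, dotProduct, Matrix.vecHead, Matrix.vecTail, Fin.sum_univ_four, A]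
    · have d1 : HasFDerivAt (fun x : Fin 4 → ℝ =>
          (x 1)*(x 1)*(x 0)⁻¹ + g/2*((x 0)*(x 0)) + μ*((x 2)*(x 0)⁻¹ - (x 0)⁻¹))
          ((proj (1 : Fin 4)).comp L) q := by
        refine (((((P 1).mul (P 1)).mul hinv).add
          (((P 0).mul (P 0)).const_mul (g/2))).add
          ((((P 2).mul hinv).sub hinv).const_mul μ)).congr_fderiv ?_
        ext v
        simp [L, Matrix.mulVec, dotProduct, Matrix.vecHead, Matrix.vecTail, Fin.sum_univ_four, A,
          hq0, hq1, hq2, hq3]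
        field_simp
        ring
      refine d1.congr_of_eventuallyEq (Filter.Eventually.of_forall fun x => ?_)
      show (x 1)^2 / (x 0) + g * (x 0)^2 / 2 + μ * ((x 2)/(x 0) - 1/(x 0)) = _
      ring
    · have d2 : HasFDerivAt (fun x : Fin 4 → ℝ => (x 1)*(x 2)*(x 0)⁻¹)
          ((proj (2 : Fin 4)).comp L) q := by
        refine (((P 1).mul (P 2)).mul hinv).congr_fderiv ?_
        ext v
        simp [L, Matrix.mulVec, dotProduct, Matrix.vecHead, Matrix.vecTail, Fin.sum_univ_four, A,
          hq0, hq1, hq2, hq3]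
        field_simp
        ring
      refine d2.congr_of_eventuallyEq (Filter.Eventually.of_forall fun x => ?_)
      show (x 1) * (x 2) / (x 0) = _
      ring
    · have d3 : HasFDerivAt (fun x : Fin 4 → ℝ => (x 1)*(x 3)*(x 0)⁻¹)
          ((proj (3 : Fin 4)).comp L) q := by
        refine (((P 1).mul (P 3)).mul hinv).congr_fderiv ?_
        ext v
        simp [L, Matrix.mulVec, dotProduct, Matrix.vecHead, Matrix.vecTail, Fin.sum_univ_four, A,
          hq0, hq1, hq2, hq3]
        field_simp
        ring
      refine d3.congr_of_eventuallyEq (Filter.Eventually.of_forall fun x => ?_)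
      show (x 1) * (x 3) / (x 0) = _
      ring
  refine ⟨hc, fun lam => ?_⟩
  rw [hF.fderiv]
  have hLlin : (L : (Fin 4 → ℝ) →ₗ[ℝ] (Fin 4 → ℝ)) = Matrix.toLin' A :=
    LinearMap.coe_toContinuousLinearMap _
  rw [hLlin]
  have hdet : (algebraMap ℝ (Matrix (Fin 4) (Fin 4) ℝ) lam - A).det
      = (lam - (u - c)) * ((lam - u)^2 * (lam - (u + c))) := by
    have hm : (algebraMap ℝ (Matrix (Fin 4) (Fin 4) ℝ) lam - A) =
        !![lam, -1, 0, 0;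
           -(g*h + μ/h^2 - μ*η/h - u^2), lam - 2*u, -(μ/h), 0;
           u*η, -η, lam - u, 0;
           u*w, -w, 0, lam - u] := by
      ext i j
      fin_cases i <;> fin_cases j <;>
        simp [A, Matrix.algebraMap_matrix_apply, Matrix.one_apply]
    rw [hm, det_fin_four']
    norm_num [Matrix.cons_val_two, Matrix.cons_val_three]
    rw [show μ*η/h = (μ/h)*η from by ring]
    have hmk : μ/h = (μ/h^2)*h := by field_simp
    have hck : μ/h^2 = c^2 - g*h := by rw [hc2]; ring
    rw [hmk, hck]
    ring
  have spec : Module.End.HasEigenvalue (Matrix.toLin' A) lam ↔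
      lam ∈ spectrum ℝ A := by
    rw [Module.End.hasEigenvalue_iff_mem_spectrum]
    have e : Matrix.toLin' A = Matrix.toLinAlgEquiv' A := rfl
    rw [e, AlgEquiv.spectrum_eq Matrix.toLinAlgEquiv' A]
  rw [spec, spectrum.mem_iff, Matrix.isUnit_iff_isUnit_det, hdet,
    isUnit_iff_ne_zero, not_not]
  constructor
  · intro hzero
    rcases mul_eq_zero.mp hzero with h4 | h5
    · left; linarith [sub_eq_zero.mp h4]
    · rcases mul_eq_zero.mp h5 with h6 | h7
      · right; left
        have := pow_eq_zero_iff (n := 2) two_ne_zero |>.mp h6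
        linarith [sub_eq_zero.mp this]
      · right; right; linarith [sub_eq_zero.mp h7]
  · rintro (h1 | h2 | h3) <;> subst lam <;> ring
end
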